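/- Every bitrade in τ-representation [τ₁, τ₂, τ₃] with |Γ| = 4 is τ-isomorphic to the τ-representation of the intercalate: on Γ = {1,2,3,4}, τ₁ = (1 2)(3 4), τ₂ = (1 3)(2 4), τ₃ = (1 4)(2 3). In particular, there is exactly one τ-isomorphism class of bitrades of size 4. -/

import Mathlib

/-- The set of points moved by a permutation. -/
def mov (σ : Equiv.Perm ℕ) : Set ℕ := {x | σ x ≠ x}

/-- The underlying set `Γ = mov(τ₁) ∪ mov(τ₂) ∪ mov(τ₃)` of a triple of permutations. -/
def Gam (τ : Fin 3 → Equiv.Perm ℕ) : Set ℕ := mov (τ 0) ∪ mov (τ 1) ∪ mov (τ 2)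

/-- A bitrade in τ-representation: a triple `[τ₁, τ₂, τ₃]` of permutations of the
finite set `Γ = mov(τ₁) ∪ mov(τ₂) ∪ mov(τ₃)` (all permutations composed left to
right) satisfying (T1) `τ₁τ₂τ₃ = 1`, (T2) any cycle of `τ_i` and any cycle of `τ_j`
(`i < j`) move at most one common point, and (T3) each `τ_i` is fixed-point-free
on `Γ`. -/
structure IsTauRep (τ : Fin 3 → Equiv.Perm ℕ) : Prop where
  fin : (Gam τ).Finite
  t1 : ∀ x, τ 2 (τ 1 (τ 0 x)) = x
  t2 : ∀ i j : Fin 3, i < j → ∀ x y : ℕ, x ≠ y →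
    ¬((τ i).SameCycle x y ∧ (τ j).SameCycle x y)
  t3 : ∀ i : Fin 3, ∀ x ∈ Gam τ, τ i x ≠ x

/-- The same-cycle setoid on the set of points moved by `σ`;
its classes are the (nontrivial) cycles of `σ`. -/
def cycSetoidOn (σ : Equiv.Perm ℕ) : Setoid (mov σ) :=
  ⟨fun a b => σ.SameCycle a.1 b.1,
    ⟨fun a => Equiv.Perm.SameCycle.refl σ a.1,
     fun h => h.symm, fun h h' => h.trans h'⟩⟩

/-- `zc σ` is the number of cycles of `σ`. -/
noncomputable def zc (σ : Equiv.Perm ℕ) : ℕ := Nat.card (Quotient (cycSetoidOn σ))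

/-- (T4): the group `⟨τ₁, τ₂, τ₃⟩` acts transitively on `Γ`. -/
def TransOn (τ : Fin 3 → Equiv.Perm ℕ) : Prop :=
  ∀ x ∈ Gam τ, ∀ y ∈ Gam τ,
    ∃ g ∈ Subgroup.closure ({τ 0, τ 1, τ 2} : Set (Equiv.Perm ℕ)), g x = y

/-- A spherical bitrade in τ-representation: (T4) holds and the genus defined by
Euler's formula `order = size + 2 - 2g` is zero. -/
def Spherical (τ : Fin 3 → Equiv.Perm ℕ) : Prop :=
  IsTauRep τ ∧ TransOn τ ∧
    zc (τ 0) + zc (τ 1) + zc (τ 2) = Nat.card (Gam τ) + 2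

/-- A bitrade in τ-representation is bicyclic if some `τ_j` has exactly two cycles. -/
def Bicyclic (τ : Fin 3 → Equiv.Perm ℕ) : Prop := ∃ j : Fin 3, zc (τ j) = 2

/-- The inverse `Z⁻¹ = [τ₁⁻¹, τ₂⁻¹, τ₂τ₁]` of a bitrade in τ-representation
(`τ₂τ₁`, composed left to right, is `τ 0 * τ 1` in Lean's convention). -/
def ZInv (τ : Fin 3 → Equiv.Perm ℕ) : Fin 3 → Equiv.Perm ℕ :=
  ![(τ 0)⁻¹, (τ 1)⁻¹, τ 0 * τ 1]

/-- `SlideRel τ x j u τ'` says that `τ'` is the result of the slide expansion of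
`τ` at the point `x ∈ Γ` in direction `j`, with new point `u ∉ Γ`.  Writing
`k = j+1`, `l = j+2`, `w = xτ_j`, `a = xτ_j⁻¹`, `b = wτ_j`, `z = xτ_k`,
`y = wτ_l⁻¹`, the preconditions are that the `τ_j`-cycle through `x` has length at
least 3 and that the `τ_k`-cycle through `x` and the `τ_l`-cycle through `w` have
no common point; the new permutations send `a ↦ u ↦ b`, `x ↦ w ↦ x` (direction `j`),
insert `u` after `x` (direction `k`) and insert `u` between `y` and `w`
(direction `l`), agreeing with the old ones elsewhere. -/
def SlideRel (τ : Fin 3 → Equiv.Perm ℕ) (x : ℕ) (j : Fin 3) (u : ℕ)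
    (τ' : Fin 3 → Equiv.Perm ℕ) : Prop :=
  x ∈ Gam τ ∧ u ∉ Gam τ ∧
  τ j x ≠ x ∧ τ j (τ j x) ≠ x ∧
  (∀ p : ℕ, (τ (j + 1)).SameCycle x p → (τ (j + 2)).SameCycle (τ j x) p → False) ∧
  (τ' j ((τ j)⁻¹ x) = u ∧ τ' j u = τ j (τ j x) ∧
    τ' j x = τ j x ∧ τ' j (τ j x) = x ∧
    ∀ p : ℕ, p ≠ (τ j)⁻¹ x → p ≠ u → p ≠ x → p ≠ τ j x → τ' j p = τ j p) ∧
  (τ' (j + 1) x = u ∧ τ' (j + 1) u = τ (j + 1) x ∧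
    ∀ p : ℕ, p ≠ x → p ≠ u → τ' (j + 1) p = τ (j + 1) p) ∧
  (τ' (j + 2) ((τ (j + 2))⁻¹ (τ j x)) = u ∧ τ' (j + 2) u = τ j x ∧
    ∀ p : ℕ, p ≠ (τ (j + 2))⁻¹ (τ j x) → p ≠ u → τ' (j + 2) p = τ (j + 2) p)

/-- The τ-representation of the intercalate, on `Γ = {1, 2, 3, 4} ⊆ ℕ`:
`τ₁ = (1 2)(3 4)`, `τ₂ = (1 3)(2 4)`, `τ₃ = (1 4)(2 3)`. -/
def intercalateRep : Fin 3 → Equiv.Perm ℕ :=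
  ![Equiv.swap 1 2 * Equiv.swap 3 4,
    Equiv.swap 1 3 * Equiv.swap 2 4,
    Equiv.swap 1 4 * Equiv.swap 2 3]


section Aux

lemma fin3_cases (i : Fin 3) : i = 0 ∨ i = 1 ∨ i = 2 := by revert i; decide

/-- Any same-cycle pair of an involution is `(x, x)` or `(x, σ x)`. -/
lemma sc_invol {σ : Equiv.Perm ℕ} (h : σ * σ = 1) {x y : ℕ}
    (hs : σ.SameCycle x y) : y = x ∨ y = σ x := by
  obtain ⟨n, hn⟩ := hs
  have h2 : σ ^ (2 : ℤ) = 1 := by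
    rw [show (2:ℤ) = 1 + 1 from rfl, zpow_add, zpow_one, h]
  have hmod : σ ^ n = σ ^ (n % 2) := by
    conv_lhs => rw [← Int.mul_ediv_add_emod n 2]
    rw [zpow_add, zpow_mul, h2, one_zpow, one_mul]
  have : n % 2 = 0 ∨ n % 2 = 1 := by omega
  rcases this with h0 | h1
  · left; rw [← hn, hmod, h0, zpow_zero, Equiv.Perm.one_apply]
  · right; rw [← hn, hmod, h1, zpow_one]

lemma sc_one (σ : Equiv.Perm ℕ) (x : ℕ) : σ.SameCycle x (σ x) := ⟨1, by simp⟩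

lemma sc_two (σ : Equiv.Perm ℕ) (x : ℕ) : σ.SameCycle x (σ (σ x)) :=
  ⟨2, by rw [show (2:ℤ) = 1 + 1 from rfl, zpow_add, zpow_one, Equiv.Perm.mul_apply]⟩

lemma mov_dswap {a b c d : ℕ} (hab : a ≠ b) (hac : a ≠ c) (had : a ≠ d)
    (hbc : b ≠ c) (hbd : b ≠ d) (hcd : c ≠ d) :
    mov (Equiv.swap a b * Equiv.swap c d) = {a, b, c, d} := by
  ext x
  simp only [mov, Set.mem_setOf_eq, Set.mem_insert_iff, Set.mem_singleton_iff,
    Equiv.Perm.mul_apply]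
  constructor
  · intro h
    by_contra hcon
    push_neg at hcon
    obtain ⟨a1, a2, a3, a4⟩ := hcon
    exact h (by rw [Equiv.swap_apply_of_ne_of_ne a3 a4, Equiv.swap_apply_of_ne_of_ne a1 a2])
  · rintro (rfl | rfl | rfl | rfl)
    · rw [Equiv.swap_apply_of_ne_of_ne hac had, Equiv.swap_apply_left]; exact hab.symm
    · rw [Equiv.swap_apply_of_ne_of_ne hbc hbd, Equiv.swap_apply_right]; exact hab
    · rw [Equiv.swap_apply_left, Equiv.swap_apply_of_ne_of_ne had.symm hbd.symm]
      exact hcd.symm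
    · rw [Equiv.swap_apply_right, Equiv.swap_apply_of_ne_of_ne hac.symm hbc.symm]
      exact hcd

lemma invol_dswap {a b c d : ℕ} (hab : a ≠ b) (hac : a ≠ c) (had : a ≠ d)
    (hbc : b ≠ c) (hbd : b ≠ d) (hcd : c ≠ d) :
    (Equiv.swap a b * Equiv.swap c d : Equiv.Perm ℕ) * (Equiv.swap a b * Equiv.swap c d) = 1 := by
  ext x
  simp only [Equiv.Perm.mul_apply, Equiv.Perm.one_apply]
  rcases eq_or_ne x a with rfl | hxa
  · rw [Equiv.swap_apply_of_ne_of_ne hac had, Equiv.swap_apply_left,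
      Equiv.swap_apply_of_ne_of_ne hbc hbd, Equiv.swap_apply_right]
  rcases eq_or_ne x b with rfl | hxb
  · rw [Equiv.swap_apply_of_ne_of_ne hbc hbd, Equiv.swap_apply_right,
      Equiv.swap_apply_of_ne_of_ne hac had, Equiv.swap_apply_left]
  rcases eq_or_ne x c with rfl | hxc
  · rw [Equiv.swap_apply_left, Equiv.swap_apply_of_ne_of_ne had.symm hbd.symm,
      Equiv.swap_apply_right, Equiv.swap_apply_of_ne_of_ne hac.symm hbc.symm]
  rcases eq_or_ne x d with rfl | hxd
  · rw [Equiv.swap_apply_right, Equiv.swap_apply_of_ne_of_ne hac.symm hbc.symm,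
      Equiv.swap_apply_left, Equiv.swap_apply_of_ne_of_ne had.symm hbd.symm]
  · rw [Equiv.swap_apply_of_ne_of_ne hxc hxd, Equiv.swap_apply_of_ne_of_ne hxa hxb,
      Equiv.swap_apply_of_ne_of_ne hxc hxd, Equiv.swap_apply_of_ne_of_ne hxa hxb]

lemma interRep0 : intercalateRep 0 = Equiv.swap 1 2 * Equiv.swap 3 4 := rfl
lemma interRep1 : intercalateRep 1 = Equiv.swap 1 3 * Equiv.swap 2 4 := rfl
lemma interRep2 : intercalateRep 2 = Equiv.swap 1 4 * Equiv.swap 2 3 := rfl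

lemma gam_inter : Gam intercalateRep = {1, 2, 3, 4} := by
  show mov (intercalateRep 0) ∪ mov (intercalateRep 1) ∪ mov (intercalateRep 2) = _
  rw [interRep0, interRep1, interRep2,
    mov_dswap (by norm_num) (by norm_num) (by norm_num) (by norm_num) (by norm_num) (by norm_num),
    mov_dswap (by norm_num) (by norm_num) (by norm_num) (by norm_num) (by norm_num) (by norm_num),
    mov_dswap (by norm_num) (by norm_num) (by norm_num) (by norm_num) (by norm_num) (by norm_num)]
  · ext x
    simp only [Set.mem_union, Set.mem_insert_iff, Set.mem_singleton_iff]
    omega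

lemma inter_fix {x : ℕ} (h1 : x ≠ 1) (h2 : x ≠ 2) (h3 : x ≠ 3) (h4 : x ≠ 4) :
    ∀ i : Fin 3, intercalateRep i x = x := by
  intro i
  rcases fin3_cases i with rfl | rfl | rfl
  · rw [interRep0, Equiv.Perm.mul_apply, Equiv.swap_apply_of_ne_of_ne h3 h4,
      Equiv.swap_apply_of_ne_of_ne h1 h2]
  · rw [interRep1, Equiv.Perm.mul_apply, Equiv.swap_apply_of_ne_of_ne h2 h4,
      Equiv.swap_apply_of_ne_of_ne h1 h3]
  · rw [interRep2, Equiv.Perm.mul_apply, Equiv.swap_apply_of_ne_of_ne h2 h3,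
      Equiv.swap_apply_of_ne_of_ne h1 h4]

lemma invol_inter : ∀ i : Fin 3, intercalateRep i * intercalateRep i = 1 := by
  intro i
  rcases fin3_cases i with rfl | rfl | rfl
  · rw [interRep0]
    exact invol_dswap (by norm_num) (by norm_num) (by norm_num) (by norm_num) (by norm_num)
      (by norm_num)
  · rw [interRep1]
    exact invol_dswap (by norm_num) (by norm_num) (by norm_num) (by norm_num) (by norm_num)
      (by norm_num)
  · rw [interRep2]
    exact invol_dswap (by norm_num) (by norm_num) (by norm_num) (by norm_num) (by norm_num)
      (by norm_num)

lemma inter_isTauRep : IsTauRep intercalateRep := by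
  constructor
  · rw [gam_inter]
    exact (Set.finite_singleton 4).insert 3 |>.insert 2 |>.insert 1
  · intro x
    show ((Equiv.swap 1 4 * Equiv.swap 2 3 : Equiv.Perm ℕ))
      (((Equiv.swap 1 3 * Equiv.swap 2 4 : Equiv.Perm ℕ))
        (((Equiv.swap 1 2 * Equiv.swap 3 4 : Equiv.Perm ℕ)) x)) = x
    rcases eq_or_ne x 1 with rfl | h1
    · simp [Equiv.swap_apply_def]
    rcases eq_or_ne x 2 with rfl | h2
    · simp [Equiv.swap_apply_def]
    rcases eq_or_ne x 3 with rfl | h3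
    · simp [Equiv.swap_apply_def]
    rcases eq_or_ne x 4 with rfl | h4
    · simp [Equiv.swap_apply_def]
    · simp [Equiv.swap_apply_def, h1, h2, h3, h4]
  · intro i j hij x y hxy hsc
    obtain ⟨hi, hj⟩ := hsc
    rcases sc_invol (invol_inter i) hi with rfl | rfl
    · exact hxy rfl
    rcases sc_invol (invol_inter j) hj with he | he
    · exact hxy he.symm
    · -- he : intercalateRep i x = intercalateRep j x, with i ≠ j
      have hne : i ≠ j := ne_of_lt hij
      rcases eq_or_ne x 1 with rfl | h1
      · rcases fin3_cases i with rfl | rfl | rfl <;> rcases fin3_cases j with rfl | rfl | rfl <;>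
          simp_all [interRep0, interRep1, interRep2, Equiv.swap_apply_def]
      rcases eq_or_ne x 2 with rfl | h2
      · rcases fin3_cases i with rfl | rfl | rfl <;> rcases fin3_cases j with rfl | rfl | rfl <;>
          simp_all [interRep0, interRep1, interRep2, Equiv.swap_apply_def]
      rcases eq_or_ne x 3 with rfl | h3
      · rcases fin3_cases i with rfl | rfl | rfl <;> rcases fin3_cases j with rfl | rfl | rfl <;>
          simp_all [interRep0, interRep1, interRep2, Equiv.swap_apply_def]
      rcases eq_or_ne x 4 with rfl | h4
      · rcases fin3_cases i with rfl | rfl | rfl <;> rcases fin3_cases j with rfl | rfl | rfl <;>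
          simp_all [interRep0, interRep1, interRep2, Equiv.swap_apply_def]
      · exact hxy (inter_fix h1 h2 h3 h4 i).symm
  · intro i x hx
    rw [gam_inter] at hx
    simp only [Set.mem_insert_iff, Set.mem_singleton_iff] at hx
    rcases hx with rfl | rfl | rfl | rfl <;> rcases fin3_cases i with rfl | rfl | rfl <;>
      simp [interRep0, interRep1, interRep2, Equiv.swap_apply_def]

lemma exists_perm_four {a b c d p q r s : ℕ} (hab : a ≠ b) (hac : a ≠ c) (had : a ≠ d)
    (hbc : b ≠ c) (hbd : b ≠ d) (hcd : c ≠ d)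
    (hpq : p ≠ q) (hpr : p ≠ r) (hps : p ≠ s) (hqr : q ≠ r) (hqs : q ≠ s) (hrs : r ≠ s) :
    ∃ θ : Equiv.Perm ℕ, θ a = p ∧ θ b = q ∧ θ c = r ∧ θ d = s := by
  set θ1 := Equiv.swap a p with hθ1
  set θ2 := Equiv.swap (θ1 b) q with hθ2
  set θ3 := Equiv.swap (θ2 (θ1 c)) r with hθ3
  set θ4 := Equiv.swap (θ3 (θ2 (θ1 d))) s with hθ4
  have h1a : θ1 a = p := Equiv.swap_apply_left a p
  have h2p : θ2 p = p := by
    refine Equiv.swap_apply_of_ne_of_ne ?_ hpq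
    rw [← h1a]; exact θ1.injective.ne hab
  have hP : θ2 (θ1 a) = p := by rw [h1a, h2p]
  have h3p : θ3 p = p := by
    refine Equiv.swap_apply_of_ne_of_ne ?_ hpr
    rw [← hP]; exact (θ2.injective.comp θ1.injective).ne hac
  have hP3 : θ3 (θ2 (θ1 a)) = p := by rw [hP, h3p]
  have h4p : θ4 p = p := by
    refine Equiv.swap_apply_of_ne_of_ne ?_ hps
    rw [← hP3]; exact (θ3.injective.comp (θ2.injective.comp θ1.injective)).ne had
  have hQ : θ2 (θ1 b) = q := Equiv.swap_apply_left _ _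
  have h3q : θ3 q = q := by
    refine Equiv.swap_apply_of_ne_of_ne ?_ hqr
    rw [← hQ]; exact (θ2.injective.comp θ1.injective).ne hbc
  have hQ3 : θ3 (θ2 (θ1 b)) = q := by rw [hQ, h3q]
  have h4q : θ4 q = q := by
    refine Equiv.swap_apply_of_ne_of_ne ?_ hqs
    rw [← hQ3]; exact (θ3.injective.comp (θ2.injective.comp θ1.injective)).ne hbd
  have hR : θ3 (θ2 (θ1 c)) = r := Equiv.swap_apply_left _ _
  have h4r : θ4 r = r := by
    refine Equiv.swap_apply_of_ne_of_ne ?_ hrs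
    rw [← hR]; exact (θ3.injective.comp (θ2.injective.comp θ1.injective)).ne hcd
  have hS : θ4 (θ3 (θ2 (θ1 d))) = s := Equiv.swap_apply_left _ _
  refine ⟨θ4 * θ3 * θ2 * θ1, ?_, ?_, ?_, ?_⟩ <;>
    simp only [Equiv.Perm.mul_apply]
  · rw [hP3, h4p]
  · rw [hQ3, h4q]
  · rw [hR, h4r]
  · exact hS

end Aux

/-- The intercalate representation is a bitrade in
τ-representation on `{1, 2, 3, 4}`, and every bitrade in τ-representation with
`|Γ| = 4` is τ-isomorphic to it.  In particular there is exactly one τ-isomorphism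
class of bitrades of size 4. -/
theorem size_four_is_intercalate :
    IsTauRep intercalateRep ∧
    Gam intercalateRep = {1, 2, 3, 4} ∧
    ∀ τ : Fin 3 → Equiv.Perm ℕ, IsTauRep τ → Nat.card (Gam τ) = 4 →
      ∃ θ : Equiv.Perm ℕ, ∀ i : Fin 3, θ * τ i * θ⁻¹ = intercalateRep i := by
  refine ⟨inter_isTauRep, gam_inter, ?_⟩
  intro τ h hcard
  -- basic facts
  have hsub : ∀ i : Fin 3, mov (τ i) ⊆ Gam τ := by
    intro i
    rcases fin3_cases i with rfl | rfl | rfl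
    · exact fun x hx => Or.inl (Or.inl hx)
    · exact fun x hx => Or.inl (Or.inr hx)
    · exact fun x hx => Or.inr hx
  have hmem : ∀ i : Fin 3, ∀ x ∈ Gam τ, τ i x ∈ Gam τ := by
    intro i x hx
    refine hsub i ?_
    show τ i (τ i x) ≠ τ i x
    intro he
    exact h.t3 i x hx ((τ i).injective he)
  have t2' : ∀ i j : Fin 3, i ≠ j → ∀ x y : ℕ, x ≠ y →
      (τ i).SameCycle x y → (τ j).SameCycle x y → False := by
    intro i j hij x y hxy hi hj
    rcases lt_or_gt_of_ne hij with hlt | hgt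
    · exact h.t2 i j hlt x y hxy ⟨hi, hj⟩
    · exact h.t2 j i hgt x y hxy ⟨hj, hi⟩
  -- the finset of Γ
  set S : Finset ℕ := h.fin.toFinset with hSdef
  have hScoe : (↑S : Set ℕ) = Gam τ := h.fin.coe_toFinset
  have hScard : S.card = 4 := by
    rw [← hcard, Nat.card_coe_set_eq, Set.ncard_eq_toFinset_card _ h.fin]
  have hmemS : ∀ x, x ∈ Gam τ → x ∈ S := by
    intro x hx; rw [← hScoe] at hx; exact hx
  -- every τ i is an involution on Γ
  have hinv : ∀ i : Fin 3, ∀ x ∈ Gam τ, τ i (τ i x) = x := by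
    intro i x hx
    by_contra hzz
    have hy : τ i x ∈ Gam τ := hmem i x hx
    have hz : τ i (τ i x) ∈ Gam τ := hmem i _ hy
    have hxy : x ≠ τ i x := (h.t3 i x hx).symm
    have hyz : τ i x ≠ τ i (τ i x) := (h.t3 i _ hy).symm
    have hxz : x ≠ τ i (τ i x) := fun he => hzz he.symm
    obtain ⟨j, k, hij, hik, hjk⟩ : ∃ j k : Fin 3, i ≠ j ∧ i ≠ k ∧ j ≠ k := by
      rcases fin3_cases i with rfl | rfl | rfl
      · exact ⟨1, 2, by decide, by decide, by decide⟩
      · exact ⟨0, 2, by decide, by decide, by decide⟩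
      · exact ⟨0, 1, by decide, by decide, by decide⟩
    have key : ∀ l : Fin 3, i ≠ l →
        τ l x ≠ x ∧ τ l x ≠ τ i x ∧ τ l x ≠ τ i (τ i x) := by
      intro l hl
      have hlx : τ l x ≠ x := h.t3 l x hx
      refine ⟨hlx, ?_, ?_⟩
      · intro he
        exact t2' i l hl x (τ i x) hxy (sc_one (τ i) x) (he ▸ sc_one (τ l) x)
      · intro he
        exact t2' i l hl x (τ i (τ i x)) hxz (sc_two (τ i) x) (he ▸ sc_one (τ l) x)
    obtain ⟨kjx, kjy, kjz⟩ := key j hij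
    obtain ⟨kkx, kky, kkz⟩ := key k hik
    -- pigeonhole: τ j x = τ k x
    have hT : ({x, τ i x, τ i (τ i x)} : Finset ℕ).card = 3 :=
      Finset.card_eq_three.mpr ⟨x, τ i x, τ i (τ i x), hxy, hxz, hyz, rfl⟩
    have hTS : ({x, τ i x, τ i (τ i x)} : Finset ℕ) ⊆ S := by
      intro u hu
      simp only [Finset.mem_insert, Finset.mem_singleton] at hu
      rcases hu with rfl | rfl | rfl
      · exact hmemS _ hx
      · exact hmemS _ hy
      · exact hmemS _ hz
    have hc1 : (S \ {x, τ i x, τ i (τ i x)}).card ≤ 1 := by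
      rw [Finset.card_sdiff_of_subset hTS, hT, hScard]
    have heq : τ j x = τ k x := by
      refine Finset.card_le_one.mp hc1 _ ?_ _ ?_ <;>
        simp only [Finset.mem_sdiff, Finset.mem_insert, Finset.mem_singleton] <;>
        refine ⟨hmemS _ (hmem _ x hx), ?_⟩ <;> tauto
    exact t2' j k hjk x (τ j x) kjx.symm (sc_one (τ j) x) (heq ▸ sc_one (τ k) x)
  -- points of Γ are x, τ0 x, τ1 x, τ2 x pairwise distinct
  have hdiff : ∀ i j : Fin 3, i ≠ j → ∀ x ∈ Gam τ, τ i x ≠ τ j x := by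
    intro i j hij x hx he
    exact t2' i j hij x (τ i x) (h.t3 i x hx).symm (sc_one (τ i) x) (he ▸ sc_one (τ j) x)
  -- pick a base point
  obtain ⟨a, ha⟩ : ∃ a, a ∈ Gam τ := by
    by_contra hno
    push_neg at hno
    have : S = ∅ := by
      ext u; simp only [Finset.notMem_empty, iff_false]
      intro hu
      exact hno u (by rw [← hScoe]; exact hu)
    rw [this] at hScard
    simp at hScard
  have hb : τ 0 a ∈ Gam τ := hmem 0 a ha
  have hc : τ 1 a ∈ Gam τ := hmem 1 a ha
  have hd : τ 2 a ∈ Gam τ := hmem 2 a ha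
  have hab : a ≠ τ 0 a := (h.t3 0 a ha).symm
  have hac : a ≠ τ 1 a := (h.t3 1 a ha).symm
  have had : a ≠ τ 2 a := (h.t3 2 a ha).symm
  have hbc : τ 0 a ≠ τ 1 a := hdiff 0 1 (by decide) a ha
  have hbd : τ 0 a ≠ τ 2 a := hdiff 0 2 (by decide) a ha
  have hcd : τ 1 a ≠ τ 2 a := hdiff 1 2 (by decide) a ha
  -- Γ = {a, b, c, d}
  have hA : ({a, τ 0 a, τ 1 a, τ 2 a} : Finset ℕ) = S := by
    refine Finset.eq_of_subset_of_card_le ?_ ?_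
    · intro u hu
      simp only [Finset.mem_insert, Finset.mem_singleton] at hu
      rcases hu with rfl | rfl | rfl | rfl
      · exact hmemS _ ha
      · exact hmemS _ hb
      · exact hmemS _ hc
      · exact hmemS _ hd
    · rw [hScard,
        Finset.card_insert_of_notMem (by simp [hab, hac, had]),
        Finset.card_insert_of_notMem (by simp [hbc, hbd]),
        Finset.card_insert_of_notMem (by simp [hcd]), Finset.card_singleton]
  have hGam : Gam τ = {a, τ 0 a, τ 1 a, τ 2 a} := by
    rw [← hScoe, ← hA]
    simp
  -- value tables
  have v0a : τ 0 (τ 0 a) = a := hinv 0 a ha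
  have v1a : τ 1 (τ 1 a) = a := hinv 1 a ha
  have v2a : τ 2 (τ 2 a) = a := hinv 2 a ha
  have vtab : ∀ i : Fin 3, ∀ x ∈ Gam τ, τ i x ≠ x → τ i x ≠ a → τ i x ≠ τ 0 a →
      τ i x ≠ τ 1 a → τ i x ≠ τ 2 a → False := by
    intro i x hx hne h1 h2 h3 h4
    have : τ i x ∈ Gam τ := hmem i x hx
    rw [hGam] at this
    simp only [Set.mem_insert_iff, Set.mem_singleton_iff] at this
    tauto
  have v0c : τ 0 (τ 1 a) = τ 2 a := by
    by_contra hne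
    refine vtab 0 (τ 1 a) hc (h.t3 0 _ hc) ?_ ?_ (h.t3 0 _ hc) hne
    · intro he
      have h2 := congrArg (τ 0) he
      rw [hinv 0 _ hc] at h2
      exact hbc h2.symm
    · intro he
      exact hac ((τ 0).injective he).symm
  have v0d : τ 0 (τ 2 a) = τ 1 a := by
    have h2 := congrArg (τ 0) v0c
    rw [hinv 0 _ hc] at h2
    exact h2.symm
  have v1b : τ 1 (τ 0 a) = τ 2 a := by
    by_contra hne
    refine vtab 1 (τ 0 a) hb (h.t3 1 _ hb) ?_ (h.t3 1 _ hb) ?_ hne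
    · intro he
      have h2 := congrArg (τ 1) he
      rw [hinv 1 _ hb] at h2
      exact hbc h2
    · intro he
      exact hab ((τ 1).injective he).symm
  have v1d : τ 1 (τ 2 a) = τ 0 a := by
    have h2 := congrArg (τ 1) v1b
    rw [hinv 1 _ hb] at h2
    exact h2.symm
  have v2b : τ 2 (τ 0 a) = τ 1 a := by
    by_contra hne
    refine vtab 2 (τ 0 a) hb (h.t3 2 _ hb) ?_ (h.t3 2 _ hb) hne ?_
    · intro he
      have h2 := congrArg (τ 2) he
      rw [hinv 2 _ hb] at h2
      exact hbd h2
    · intro he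
      exact hab ((τ 2).injective he).symm
  have v2c : τ 2 (τ 1 a) = τ 0 a := by
    have h2 := congrArg (τ 2) v2b
    rw [hinv 2 _ hb] at h2
    exact h2.symm
  -- the isomorphism
  obtain ⟨θ, ht1, ht2, ht3, ht4⟩ :=
    exists_perm_four hab hac had hbc hbd hcd
      (show (1:ℕ) ≠ 2 by norm_num) (show (1:ℕ) ≠ 3 by norm_num) (show (1:ℕ) ≠ 4 by norm_num)
      (show (2:ℕ) ≠ 3 by norm_num) (show (2:ℕ) ≠ 4 by norm_num) (show (3:ℕ) ≠ 4 by norm_num)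
  have hs1 : θ⁻¹ 1 = a := by rw [Equiv.Perm.inv_eq_iff_eq]; exact ht1.symm
  have hs2 : θ⁻¹ 2 = τ 0 a := by rw [Equiv.Perm.inv_eq_iff_eq]; exact ht2.symm
  have hs3 : θ⁻¹ 3 = τ 1 a := by rw [Equiv.Perm.inv_eq_iff_eq]; exact ht3.symm
  have hs4 : θ⁻¹ 4 = τ 2 a := by rw [Equiv.Perm.inv_eq_iff_eq]; exact ht4.symm
  refine ⟨θ, ?_⟩
  have hfix : ∀ i : Fin 3, ∀ x : ℕ, x ≠ 1 → x ≠ 2 → x ≠ 3 → x ≠ 4 →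
      θ (τ i (θ⁻¹ x)) = x := by
    intro i x h1 h2 h3 h4
    have hnot : θ⁻¹ x ∉ Gam τ := by
      rw [hGam]
      simp only [Set.mem_insert_iff, Set.mem_singleton_iff]
      push_neg
      refine ⟨?_, ?_, ?_, ?_⟩ <;> intro he
      · exact h1 (by rw [← ht1, ← he, ← Equiv.Perm.mul_apply, mul_inv_cancel, Equiv.Perm.one_apply])
      · exact h2 (by rw [← ht2, ← he, ← Equiv.Perm.mul_apply, mul_inv_cancel, Equiv.Perm.one_apply])
      · exact h3 (by rw [← ht3, ← he, ← Equiv.Perm.mul_apply, mul_inv_cancel, Equiv.Perm.one_apply])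
      · exact h4 (by rw [← ht4, ← he, ← Equiv.Perm.mul_apply, mul_inv_cancel, Equiv.Perm.one_apply])
    have hfixv : τ i (θ⁻¹ x) = θ⁻¹ x := by
      by_contra hne
      exact hnot (hsub i hne)
    rw [hfixv, ← Equiv.Perm.mul_apply, mul_inv_cancel, Equiv.Perm.one_apply]
  intro i
  rcases fin3_cases i with rfl | rfl | rfl
  · ext x
    simp only [Equiv.Perm.mul_apply]
    rcases eq_or_ne x 1 with rfl | h1
    · rw [hs1, ht2, interRep0]; simp [Equiv.swap_apply_def]
    rcases eq_or_ne x 2 with rfl | h2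
    · rw [hs2, v0a, ht1, interRep0]; simp [Equiv.swap_apply_def]
    rcases eq_or_ne x 3 with rfl | h3
    · rw [hs3, v0c, ht4, interRep0]; simp [Equiv.swap_apply_def]
    rcases eq_or_ne x 4 with rfl | h4
    · rw [hs4, v0d, ht3, interRep0]; simp [Equiv.swap_apply_def]
    · rw [hfix 0 x h1 h2 h3 h4, inter_fix h1 h2 h3 h4 0]
  · ext x
    simp only [Equiv.Perm.mul_apply]
    rcases eq_or_ne x 1 with rfl | h1
    · rw [hs1, ht3, interRep1]; simp [Equiv.swap_apply_def]
    rcases eq_or_ne x 2 with rfl | h2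
    · rw [hs2, v1b, ht4, interRep1]; simp [Equiv.swap_apply_def]
    rcases eq_or_ne x 3 with rfl | h3
    · rw [hs3, v1a, ht1, interRep1]; simp [Equiv.swap_apply_def]
    rcases eq_or_ne x 4 with rfl | h4
    · rw [hs4, v1d, ht2, interRep1]; simp [Equiv.swap_apply_def]
    · rw [hfix 1 x h1 h2 h3 h4, inter_fix h1 h2 h3 h4 1]
  · ext x
    simp only [Equiv.Perm.mul_apply]
    rcases eq_or_ne x 1 with rfl | h1
    · rw [hs1, ht4, interRep2]; simp [Equiv.swap_apply_def]
    rcases eq_or_ne x 2 with rfl | h2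
    · rw [hs2, v2b, ht3, interRep2]; simp [Equiv.swap_apply_def]
    rcases eq_or_ne x 3 with rfl | h3
    · rw [hs3, v2c, ht2, interRep2]; simp [Equiv.swap_apply_def]
    rcases eq_or_ne x 4 with rfl | h4
    · rw [hs4, v2a, ht1, interRep2]; simp [Equiv.swap_apply_def]
    · rw [hfix 2 x h1 h2 h3 h4, inter_fix h1 h2 h3 h4 2]
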